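/- For every nonzero M ∈ ⋀X: (i) in(M) ≤ bot(M) ≤ top(M) ≤ out(M); (ii) in(M) + out(★M) = n and bot(M) + top(★M) = n. -/

import Mathlib

/-!
Setup: `X` is a finite-dimensional real inner product space, `⋀X` its exterior
algebra.  We hypothesize a bilinear form `innE` on the exterior algebra which makes
the wedges of any orthonormal basis of `X` (over increasing index sets) orthonormal
— this characterizes the inner product of the paper — and a bilinear left
contraction `lcontr` adjoint to the wedge product: `⟨M⌟N, L⟩ = ⟨N, M∧L⟩`.
-/

noncomputable section

open ExteriorAlgebra

/-- The wedge product `v_{i₁} ∧ ⋯ ∧ v_{i_p}` of the vectors `v i`, `i ∈ s`,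
taken in increasing order of the indices. -/
def wedgeOf {X : Type*} [AddCommGroup X] [Module ℝ X] {n : ℕ}
    (v : Fin n → X) (s : Finset (Fin n)) : ExteriorAlgebra ℝ X :=
  ((s.sort (· ≤ ·)).map fun i => ι ℝ (v i)).prod

/-- The inner space `isp M = {v : v ∧ M = 0}`. -/
def isp {X : Type*} [AddCommGroup X] [Module ℝ X]
    (M : ExteriorAlgebra ℝ X) : Submodule ℝ X where
  carrier := {x | ι ℝ x * M = 0}
  add_mem' := by
    intro a b ha hb
    simp only [Set.mem_setOf_eq, map_add, add_mul] at *
    rw [ha, hb, add_zero]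
  zero_mem' := by simp
  smul_mem' := by
    intro c x hx
    simp only [Set.mem_setOf_eq, map_smul, smul_mul_assoc] at *
    rw [hx, smul_zero]

/-- The space `{v : v ⌟ M = 0}`, whose orthogonal complement is the outer space. -/
def ospKer {X : Type*} [NormedAddCommGroup X] [InnerProductSpace ℝ X]
    (lcontr : ExteriorAlgebra ℝ X →ₗ[ℝ] ExteriorAlgebra ℝ X →ₗ[ℝ] ExteriorAlgebra ℝ X)
    (M : ExteriorAlgebra ℝ X) : Submodule ℝ X where
  carrier := {x | lcontr (ι ℝ x) M = 0}
  add_mem' := by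
    intro a b ha hb
    simp only [Set.mem_setOf_eq, map_add, LinearMap.add_apply] at *
    rw [ha, hb, add_zero]
  zero_mem' := by simp
  smul_mem' := by
    intro c x hx
    simp only [Set.mem_setOf_eq, map_smul, LinearMap.smul_apply] at *
    rw [hx, smul_zero]

/-- The outer space `osp M = {v : v ⌟ M = 0}ᗮ`. -/
def osp {X : Type*} [NormedAddCommGroup X] [InnerProductSpace ℝ X]
    (lcontr : ExteriorAlgebra ℝ X →ₗ[ℝ] ExteriorAlgebra ℝ X →ₗ[ℝ] ExteriorAlgebra ℝ X)
    (M : ExteriorAlgebra ℝ X) : Submodule ℝ X :=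
  (ospKer lcontr M)ᗮ

/-- `innE` is the inner product of `⋀X`: for every orthonormal basis of `X`, the
wedges of basis vectors over increasing index sets form an orthonormal family. -/
def InnerOK {X : Type*} [NormedAddCommGroup X] [InnerProductSpace ℝ X]
    (innE : ExteriorAlgebra ℝ X →ₗ[ℝ] ExteriorAlgebra ℝ X →ₗ[ℝ] ℝ) : Prop :=
  ∀ (m : ℕ) (w : OrthonormalBasis (Fin m) ℝ X) (s t : Finset (Fin m)),
    innE (wedgeOf (⇑w) s) (wedgeOf (⇑w) t) = if s = t then 1 else 0

/-- `lcontr` is the left contraction: `⟨M ⌟ N, L⟩ = ⟨N, M ∧ L⟩`. -/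
def ContrOK {X : Type*} [NormedAddCommGroup X] [InnerProductSpace ℝ X]
    (innE : ExteriorAlgebra ℝ X →ₗ[ℝ] ExteriorAlgebra ℝ X →ₗ[ℝ] ℝ)
    (lcontr : ExteriorAlgebra ℝ X →ₗ[ℝ] ExteriorAlgebra ℝ X →ₗ[ℝ] ExteriorAlgebra ℝ X) :
    Prop :=
  ∀ M N L : ExteriorAlgebra ℝ X, innE (lcontr M N) L = innE N (M * L)


/-- Projection onto the grade-`p` homogeneous component of the exterior algebra. -/
def gradeProj {X : Type*} [AddCommGroup X] [Module ℝ X] (p : ℕ) :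
    ExteriorAlgebra ℝ X →ₗ[ℝ] ExteriorAlgebra ℝ X :=
  GradedAlgebra.proj (fun i : ℕ => ⋀[ℝ]^i X) p

/-- The bottom grade: least `p` with `⟨M⟩_p ≠ 0`. -/
noncomputable def bgrade {X : Type*} [AddCommGroup X] [Module ℝ X]
    (M : ExteriorAlgebra ℝ X) : ℕ :=
  sInf {p | gradeProj p M ≠ 0}

/-- The top grade: greatest `p` with `⟨M⟩_p ≠ 0`. -/
noncomputable def tgrade {X : Type*} [AddCommGroup X] [Module ℝ X]
    (M : ExteriorAlgebra ℝ X) : ℕ :=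
  sSup {p | gradeProj p M ≠ 0}

namespace GG

def IsSign (ε : ℝ) : Prop := ε = 1 ∨ ε = -1

lemma IsSign.ne_zero {ε : ℝ} (h : IsSign ε) : ε ≠ 0 := by rcases h with h | h <;> simp [h]
lemma IsSign.one : IsSign (1 : ℝ) := Or.inl rfl
lemma IsSign.neg_one : IsSign (-1 : ℝ) := Or.inr rfl
lemma IsSign.mul {a b : ℝ} (ha : IsSign a) (hb : IsSign b) : IsSign (a * b) := by
  rcases ha with h | h <;> rcases hb with h' | h' <;> simp [IsSign, h, h']
lemma IsSign.mul_self {a : ℝ} (ha : IsSign a) : a * a = 1 := by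
  rcases ha with h | h <;> norm_num [h]

variable {X : Type*} [AddCommGroup X] [Module ℝ X] {n : ℕ}

def wprod (v : Fin n → X) (l : List (Fin n)) : ExteriorAlgebra ℝ X :=
  (l.map fun i => ι ℝ (v i)).prod

@[simp] lemma wprod_nil (v : Fin n → X) : wprod v [] = 1 := rfl

@[simp] lemma wprod_cons (v : Fin n → X) (a : Fin n) (l : List (Fin n)) :
    wprod v (a :: l) = ι ℝ (v a) * wprod v l := by
  simp [wprod]

lemma wedgeOf_eq_wprod (v : Fin n → X) (s : Finset (Fin n)) :
    wedgeOf v s = wprod v (s.sort (· ≤ ·)) := rfl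

lemma wprod_perm (v : Fin n → X) {l l' : List (Fin n)} (h : l.Perm l') :
    ∃ ε, IsSign ε ∧ wprod v l = ε • wprod v l' := by
  induction h with
  | nil => exact ⟨1, IsSign.one, by simp⟩
  | cons a h ih =>
    obtain ⟨ε, hε, he⟩ := ih
    exact ⟨ε, hε, by simp [he, mul_smul_comm]⟩
  | swap a b l =>
    refine ⟨-1, IsSign.neg_one, ?_⟩
    have h := ι_add_mul_swap (R := ℝ) (v b) (v a)
    have : ι ℝ (v b) * ι ℝ (v a) = -(ι ℝ (v a) * ι ℝ (v b)) := eq_neg_of_add_eq_zero_left h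
    simp only [wprod_cons, ← mul_assoc, this, neg_smul, one_smul, neg_mul]
  | trans h1 h2 ih1 ih2 =>
    obtain ⟨ε1, hε1, he1⟩ := ih1
    obtain ⟨ε2, hε2, he2⟩ := ih2
    exact ⟨ε1 * ε2, hε1.mul hε2, by rw [he1, he2, smul_smul]⟩

lemma ι_mul_wprod_of_mem (v : Fin n → X) {i : Fin n} {l : List (Fin n)} (h : i ∈ l) :
    ι ℝ (v i) * wprod v l = 0 := by
  obtain ⟨ε, hε, he⟩ := wprod_perm v (List.perm_cons_erase h)
  rw [he, mul_smul_comm, wprod_cons, ← mul_assoc, ι_sq_zero, zero_mul, smul_zero]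

lemma ι_mul_wedgeOf_of_mem (v : Fin n → X) {i : Fin n} {s : Finset (Fin n)} (h : i ∈ s) :
    ι ℝ (v i) * wedgeOf v s = 0 :=
  ι_mul_wprod_of_mem v (by simpa using h)

lemma ι_mul_wedgeOf_of_not_mem (v : Fin n → X) {i : Fin n} {s : Finset (Fin n)} (h : i ∉ s) :
    ∃ ε, IsSign ε ∧ ι ℝ (v i) * wedgeOf v s = ε • wedgeOf v (insert i s) := by
  have hperm : (i :: s.sort (· ≤ ·)).Perm ((insert i s).sort (· ≤ ·)) := by
    refine List.Perm.trans (List.Perm.cons i (Finset.sort_perm_toList s _)) ?_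
    refine List.Perm.trans ?_ (Finset.sort_perm_toList _ _).symm
    exact (Finset.toList_insert h).symm
  obtain ⟨ε, hε, he⟩ := wprod_perm v hperm
  exact ⟨ε, hε, by rw [wedgeOf_eq_wprod, ← wprod_cons, he, ← wedgeOf_eq_wprod]⟩

lemma wprod_mul_wedgeOf (v : Fin n → X) :
    ∀ l : List (Fin n), l.Nodup → ∀ t : Finset (Fin n),
      (Disjoint l.toFinset t →
        ∃ ε, IsSign ε ∧ wprod v l * wedgeOf v t = ε • wedgeOf v (l.toFinset ∪ t)) ∧
      (¬ Disjoint l.toFinset t → wprod v l * wedgeOf v t = 0) := by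
  intro l
  induction l with
  | nil =>
    intro _ t
    constructor
    · intro _; exact ⟨1, IsSign.one, by simp⟩
    · intro h; exact absurd (by simp) h
  | cons a l ih =>
    intro hnd t
    have hal : a ∉ l := (List.nodup_cons.mp hnd).1
    have hl : l.Nodup := (List.nodup_cons.mp hnd).2
    have htf : (a :: l).toFinset = insert a l.toFinset := by simp
    constructor
    · intro hdisj
      rw [htf, Finset.disjoint_insert_left] at hdisj
      obtain ⟨hat, hlt⟩ := hdisj
      obtain ⟨ε, hε, he⟩ := (ih hl t).1 hlt
      have hau : a ∉ l.toFinset ∪ t := by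
        simp only [Finset.mem_union]
        push_neg
        exact ⟨by simpa using hal, hat⟩
      obtain ⟨ε', hε', he'⟩ := ι_mul_wedgeOf_of_not_mem v hau
      refine ⟨ε * ε', hε.mul hε', ?_⟩
      rw [wprod_cons, mul_assoc, he, mul_smul_comm, he', smul_smul, htf,
        Finset.insert_union]
    · intro hdisj
      rw [htf, Finset.disjoint_insert_left, not_and_or] at hdisj
      rcases hdisj with hat | hlt
      · push_neg at hat
        by_cases hlt : Disjoint l.toFinset t
        · obtain ⟨ε, hε, he⟩ := (ih hl t).1 hlt
          rw [wprod_cons, mul_assoc, he, mul_smul_comm,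
            ι_mul_wedgeOf_of_mem v (Finset.mem_union_right _ hat), smul_zero]
        · rw [wprod_cons, mul_assoc, (ih hl t).2 hlt, mul_zero]
      · rw [wprod_cons, mul_assoc, (ih hl t).2 hlt, mul_zero]

lemma wedgeOf_mul_wedgeOf_of_disjoint (v : Fin n → X) {s t : Finset (Fin n)}
    (h : Disjoint s t) :
    ∃ ε, IsSign ε ∧ wedgeOf v s * wedgeOf v t = ε • wedgeOf v (s ∪ t) := by
  have := (wprod_mul_wedgeOf v (s.sort (· ≤ ·)) (Finset.sort_nodup s _) t).1
  rw [Finset.sort_toFinset] at this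
  exact this h

lemma wedgeOf_mul_wedgeOf_of_not_disjoint (v : Fin n → X) {s t : Finset (Fin n)}
    (h : ¬ Disjoint s t) : wedgeOf v s * wedgeOf v t = 0 := by
  have := (wprod_mul_wedgeOf v (s.sort (· ≤ ·)) (Finset.sort_nodup s _) t).2
  rw [Finset.sort_toFinset] at this
  exact this h

/-- the sign occurring in `e s * e t` for disjoint `s t`. -/
def msign (v : Fin n → X) (s t : Finset (Fin n)) : ℝ :=
  if h : Disjoint s t then (wedgeOf_mul_wedgeOf_of_disjoint v h).choose else 1

lemma msign_isSign (v : Fin n → X) (s t : Finset (Fin n)) : IsSign (msign v s t) := by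
  unfold msign
  split
  · exact (wedgeOf_mul_wedgeOf_of_disjoint v ‹_›).choose_spec.1
  · exact IsSign.one

lemma wedgeOf_mul_wedgeOf (v : Fin n → X) {s t : Finset (Fin n)} (h : Disjoint s t) :
    wedgeOf v s * wedgeOf v t = msign v s t • wedgeOf v (s ∪ t) := by
  unfold msign
  rw [dif_pos h]
  exact (wedgeOf_mul_wedgeOf_of_disjoint v h).choose_spec.2

/-- sign in `ι v i * e s` for `i ∉ s`. -/
def isign (v : Fin n → X) (i : Fin n) (s : Finset (Fin n)) : ℝ :=
  if h : i ∉ s then (ι_mul_wedgeOf_of_not_mem v h).choose else 1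

lemma isign_isSign (v : Fin n → X) (i : Fin n) (s : Finset (Fin n)) : IsSign (isign v i s) := by
  unfold isign
  split
  · exact (ι_mul_wedgeOf_of_not_mem v ‹_›).choose_spec.1
  · exact IsSign.one

lemma ι_mul_wedgeOf (v : Fin n → X) {i : Fin n} {s : Finset (Fin n)} (h : i ∉ s) :
    ι ℝ (v i) * wedgeOf v s = isign v i s • wedgeOf v (insert i s) := by
  unfold isign
  rw [dif_pos h]
  exact (ι_mul_wedgeOf_of_not_mem v h).choose_spec.2

lemma wprod_mul_ι (v : Fin n → X) (i : Fin n) (l : List (Fin n)) :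
    wprod v l * ι ℝ (v i) = ((-1 : ℝ) ^ l.length) • (ι ℝ (v i) * wprod v l) := by
  induction l with
  | nil => simp
  | cons a l ih =>
    have h := ι_add_mul_swap (R := ℝ) (v a) (v i)
    have hsw : ι ℝ (v a) * ι ℝ (v i) = -(ι ℝ (v i) * ι ℝ (v a)) := eq_neg_of_add_eq_zero_left h
    rw [wprod_cons, mul_assoc, ih, mul_smul_comm, ← mul_assoc, hsw, neg_mul, smul_neg,
      List.length_cons, pow_succ, mul_comm ((-1:ℝ)^l.length) (-1:ℝ), mul_smul, neg_one_smul,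
      mul_assoc]

lemma wedgeOf_mul_ι (v : Fin n → X) (i : Fin n) (s : Finset (Fin n)) :
    wedgeOf v s * ι ℝ (v i) = ((-1 : ℝ) ^ s.card) • (ι ℝ (v i) * wedgeOf v s) := by
  rw [wedgeOf_eq_wprod, wprod_mul_ι, Finset.length_sort]

lemma wprod_mem (v : Fin n → X) (l : List (Fin n)) :
    wprod v l ∈ ⋀[ℝ]^(l.length) X := by
  induction l with
  | nil =>
    show (1 : ExteriorAlgebra ℝ X) ∈ LinearMap.range (ι ℝ : X →ₗ[ℝ] ExteriorAlgebra ℝ X) ^ 0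
    rw [pow_zero]
    exact Submodule.one_le.mp le_rfl
  | cons a l ih =>
    show _ ∈ LinearMap.range (ι ℝ : X →ₗ[ℝ] ExteriorAlgebra ℝ X) ^ (l.length + 1)
    rw [wprod_cons, pow_succ']
    exact Submodule.mul_mem_mul (LinearMap.mem_range_self _ _) ih

lemma wedgeOf_mem (v : Fin n → X) (s : Finset (Fin n)) :
    wedgeOf v s ∈ ⋀[ℝ]^(s.card) X := by
  have := wprod_mem v (s.sort (· ≤ ·))
  rwa [Finset.length_sort, ← wedgeOf_eq_wprod] at this

end GG
namespace GG

section Main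

set_option linter.unusedSectionVars false

variable {X : Type*} [NormedAddCommGroup X] [InnerProductSpace ℝ X] [FiniteDimensional ℝ X]
variable {n : ℕ}

local notation "e" => wedgeOf

lemma wedgeOf_empty (v : Fin n → X) : wedgeOf v (∅ : Finset (Fin n)) = 1 := by
  simp [wedgeOf]

lemma wedgeOf_singleton (v : Fin n → X) (i : Fin n) : wedgeOf v {i} = ι ℝ (v i) := by
  simp [wedgeOf, Finset.sort_singleton]

lemma span_wedge (w : OrthonormalBasis (Fin n) ℝ X) :
    Submodule.span ℝ (Set.range (wedgeOf (⇑w))) = ⊤ := by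
  set S := Submodule.span ℝ (Set.range (wedgeOf (⇑w))) with hS
  rw [eq_top_iff]
  suffices h : ∀ M : ExteriorAlgebra ℝ X, M ∈ S by exact fun M _ => h M
  intro M
  induction M using ExteriorAlgebra.induction with
  | algebraMap r =>
    have h1 : (1 : ExteriorAlgebra ℝ X) ∈ S :=
      Submodule.subset_span ⟨∅, wedgeOf_empty _⟩
    have : (algebraMap ℝ (ExteriorAlgebra ℝ X)) r = r • (1 : ExteriorAlgebra ℝ X) := by
      rw [Algebra.algebraMap_eq_smul_one]
    rw [this]
    exact S.smul_mem r h1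
  | ι x =>
    have hx : x = ∑ i, w.repr x i • w i := (w.sum_repr x).symm
    rw [hx, map_sum]
    refine Submodule.sum_mem _ fun i _ => ?_
    rw [map_smul]
    exact S.smul_mem _ (Submodule.subset_span ⟨{i}, wedgeOf_singleton _ i⟩)
  | mul a b ha hb =>
    have hSS : S * S ≤ S := by
      rw [hS, Submodule.span_mul_span]
      refine Submodule.span_le.mpr ?_
      rintro x ⟨y, ⟨s, rfl⟩, z, ⟨t, rfl⟩, rfl⟩
      show wedgeOf (⇑w) s * wedgeOf (⇑w) t ∈ (Submodule.span ℝ (Set.range (wedgeOf (⇑w))))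
      by_cases hd : Disjoint s t
      · rw [wedgeOf_mul_wedgeOf _ hd]
        exact S.smul_mem _ (Submodule.subset_span ⟨s ∪ t, rfl⟩)
      · rw [wedgeOf_mul_wedgeOf_of_not_disjoint _ hd]
        exact S.zero_mem
    exact hSS (Submodule.mul_mem_mul ha hb)
  | add a b ha hb => exact S.add_mem ha hb

variable (innE : ExteriorAlgebra ℝ X →ₗ[ℝ] ExteriorAlgebra ℝ X →ₗ[ℝ] ℝ)
variable (w : OrthonormalBasis (Fin n) ℝ X)

lemma repr_eq (hinn : InnerOK innE) (A : ExteriorAlgebra ℝ X) :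
    A = ∑ s : Finset (Fin n), innE A (wedgeOf (⇑w) s) • wedgeOf (⇑w) s := by
  set T : ExteriorAlgebra ℝ X →ₗ[ℝ] ExteriorAlgebra ℝ X :=
    ∑ s : Finset (Fin n),
      LinearMap.smulRight (innE.flip (wedgeOf (⇑w) s)) (wedgeOf (⇑w) s) with hT
  have hTe : ∀ t : Finset (Fin n), T (wedgeOf (⇑w) t) = wedgeOf (⇑w) t := by
    intro t
    rw [hT]
    simp only [LinearMap.sum_apply, LinearMap.smulRight_apply, LinearMap.flip_apply]
    rw [Finset.sum_eq_single t]
    · rw [hinn n w t t, if_pos rfl, one_smul]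
    · intro s _ hst
      rw [hinn n w t s, if_neg (Ne.symm hst), zero_smul]
    · intro h; exact absurd (Finset.mem_univ t) h
  have hid : T = LinearMap.id := by
    refine LinearMap.ext_on (span_wedge w) ?_
    rintro x ⟨s, rfl⟩
    rw [hTe s, LinearMap.id_apply]
  have : T A = A := by rw [hid, LinearMap.id_apply]
  conv_lhs => rw [← this, hT]
  simp only [LinearMap.sum_apply, LinearMap.smulRight_apply, LinearMap.flip_apply]

lemma eval_sum (hinn : InnerOK innE) (a : Finset (Fin n) → ℝ) (t : Finset (Fin n)) :
    innE (∑ s : Finset (Fin n), a s • wedgeOf (⇑w) s) (wedgeOf (⇑w) t) = a t := by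
  rw [map_sum, LinearMap.sum_apply]
  have : ∀ s : Finset (Fin n),
      innE (a s • wedgeOf (⇑w) s) (wedgeOf (⇑w) t) = if s = t then a s else 0 := by
    intro s
    rw [map_smul, LinearMap.smul_apply, hinn n w s t, smul_eq_mul, mul_ite, mul_one, mul_zero]
  simp only [this]
  simp

lemma eq_zero_iff (hinn : InnerOK innE) (A : ExteriorAlgebra ℝ X) :
    A = 0 ↔ ∀ s : Finset (Fin n), innE A (wedgeOf (⇑w) s) = 0 := by
  constructor
  · intro h s; rw [h]; simp
  · intro h
    rw [repr_eq innE w hinn A]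
    exact Finset.sum_eq_zero fun s _ => by rw [h s, zero_smul]

end Main

end GG
namespace GG
section Grades
set_option linter.unusedSectionVars false
set_option maxHeartbeats 800000

variable {X : Type*} [NormedAddCommGroup X] [InnerProductSpace ℝ X] [FiniteDimensional ℝ X]
variable {n : ℕ}
variable (innE : ExteriorAlgebra ℝ X →ₗ[ℝ] ExteriorAlgebra ℝ X →ₗ[ℝ] ℝ)
variable (w : OrthonormalBasis (Fin n) ℝ X)

lemma gradeProj_of_mem {p : ℕ} {A : ExteriorAlgebra ℝ X} (h : A ∈ ⋀[ℝ]^p X) :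
    gradeProj p A = A := by
  simp only [gradeProj, GradedAlgebra.proj_apply]
  exact DirectSum.decompose_of_mem_same _ h

lemma gradeProj_of_mem_ne {p q : ℕ} {A : ExteriorAlgebra ℝ X} (h : A ∈ ⋀[ℝ]^q X)
    (hq : q ≠ p) : gradeProj p A = 0 := by
  simp only [gradeProj, GradedAlgebra.proj_apply]
  exact DirectSum.decompose_of_mem_ne (fun i : ℕ => ⋀[ℝ]^i X) h hq

lemma exists_gradeProj_ne {A : ExteriorAlgebra ℝ X} (h : A ≠ 0) :
    ∃ p, gradeProj p A ≠ 0 := by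
  classical
  by_contra hall
  push_neg at hall
  apply h
  have hdec := DirectSum.sum_support_decompose (fun i : ℕ => ⋀[ℝ]^i X) A
  rw [← hdec]
  refine Finset.sum_eq_zero fun p _ => ?_
  have := hall p
  simpa only [gradeProj, GradedAlgebra.proj_apply] using this

lemma gradeProj_wedgeOf (p : ℕ) (s : Finset (Fin n)) :
    gradeProj p (wedgeOf (⇑w) s) =
      if s.card = p then wedgeOf (⇑w) s else 0 := by
  by_cases h : s.card = p
  · rw [if_pos h]
    exact gradeProj_of_mem (h ▸ wedgeOf_mem (⇑w) s)
  · rw [if_neg h]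
    exact gradeProj_of_mem_ne (wedgeOf_mem (⇑w) s) h

lemma gradeProj_coeff (hinn : InnerOK innE) (p : ℕ) (A : ExteriorAlgebra ℝ X)
    (t : Finset (Fin n)) :
    innE (gradeProj p A) (wedgeOf (⇑w) t) =
      if t.card = p then innE A (wedgeOf (⇑w) t) else 0 := by
  conv_lhs => rw [repr_eq innE w hinn A, map_sum]
  have hterm : ∀ s : Finset (Fin n),
      gradeProj p (innE A (wedgeOf (⇑w) s) • wedgeOf (⇑w) s) =
        (if s.card = p then innE A (wedgeOf (⇑w) s) else 0) • wedgeOf (⇑w) s := by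
    intro s
    rw [map_smul, gradeProj_wedgeOf w p s]
    by_cases h : s.card = p
    · rw [if_pos h, if_pos h]
    · rw [if_neg h, if_neg h, smul_zero, zero_smul]
  simp only [hterm]
  rw [eval_sum innE w hinn]

lemma gradeProj_ne_zero_iff (hinn : InnerOK innE) (p : ℕ) (A : ExteriorAlgebra ℝ X) :
    gradeProj p A ≠ 0 ↔
      ∃ s : Finset (Fin n), s.card = p ∧ innE A (wedgeOf (⇑w) s) ≠ 0 := by
  constructor
  · intro h
    by_contra hc
    push_neg at hc
    apply h
    rw [eq_zero_iff innE w hinn]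
    intro t
    rw [gradeProj_coeff innE w hinn]
    by_cases ht : t.card = p
    · rw [if_pos ht]; exact hc t ht
    · rw [if_neg ht]
  · rintro ⟨s, hcard, hne⟩ h0
    apply hne
    have := gradeProj_coeff innE w hinn p A s
    rw [h0, map_zero, LinearMap.zero_apply, if_pos hcard] at this
    exact this.symm

/-- key helper: a combination `∑ b s • (ι (w i) * e s)` vanishes iff all coefficients
with `i ∉ s` vanish. -/
lemma sum_ι_mul_eq_zero_iff (hinn : InnerOK innE) (i : Fin n) (b : Finset (Fin n) → ℝ) :
    ∑ s : Finset (Fin n), b s • (ι ℝ (w i) * wedgeOf (⇑w) s) = 0 ↔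
      ∀ s : Finset (Fin n), i ∉ s → b s = 0 := by
  constructor
  · intro h s₀ hs₀
    have h1 := congrArg (fun z => innE z (wedgeOf (⇑w) (insert i s₀))) h
    simp only [map_sum, LinearMap.sum_apply, map_zero, LinearMap.zero_apply] at h1
    rw [Finset.sum_eq_single s₀] at h1
    · rw [map_smul, LinearMap.smul_apply, ι_mul_wedgeOf (⇑w) hs₀, map_smul,
        LinearMap.smul_apply, hinn n w, if_pos rfl] at h1
      have hsig := isign_isSign (⇑w) i s₀
      rcases hsig with hs | hs <;> rw [hs] at h1 <;> simpa using h1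
    · intro s _ hss
      by_cases hi : i ∈ s
      · rw [ι_mul_wedgeOf_of_mem (⇑w) hi, smul_zero, map_zero, LinearMap.zero_apply]
      · rw [map_smul, LinearMap.smul_apply, ι_mul_wedgeOf (⇑w) hi, map_smul,
          LinearMap.smul_apply, hinn n w, if_neg, smul_eq_mul, smul_eq_mul,
          mul_zero, mul_zero]
        intro heq
        apply hss
        have h1 : s = insert i s \ {i} := by
          rw [Finset.insert_sdiff_of_mem _ (Finset.mem_singleton_self i),
            Finset.sdiff_singleton_eq_erase, Finset.erase_eq_of_notMem hi]
        have h2 : s₀ = insert i s₀ \ {i} := by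
          rw [Finset.insert_sdiff_of_mem _ (Finset.mem_singleton_self i),
            Finset.sdiff_singleton_eq_erase, Finset.erase_eq_of_notMem hs₀]
        rw [h1, h2, heq]
    · intro h; exact absurd (Finset.mem_univ s₀) h
  · intro h
    refine Finset.sum_eq_zero fun s _ => ?_
    by_cases hi : i ∈ s
    · rw [ι_mul_wedgeOf_of_mem (⇑w) hi, smul_zero]
    · rw [h s hi, zero_smul]

lemma ι_mul_eq_zero_iff (hinn : InnerOK innE) (i : Fin n) (A : ExteriorAlgebra ℝ X) :
    ι ℝ (w i) * A = 0 ↔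
      ∀ s : Finset (Fin n), i ∉ s → innE A (wedgeOf (⇑w) s) = 0 := by
  have hexp : ι ℝ (w i) * A =
      ∑ s : Finset (Fin n), innE A (wedgeOf (⇑w) s) • (ι ℝ (w i) * wedgeOf (⇑w) s) := by
    conv_lhs => rw [repr_eq innE w hinn A]
    rw [Finset.mul_sum]
    exact Finset.sum_congr rfl fun s _ => (mul_smul_comm _ _ _)
  rw [hexp]
  exact sum_ι_mul_eq_zero_iff innE w hinn i _

lemma mul_ι_eq_zero_iff (hinn : InnerOK innE) (i : Fin n) (A : ExteriorAlgebra ℝ X) :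
    A * ι ℝ (w i) = 0 ↔
      ∀ s : Finset (Fin n), i ∉ s → innE A (wedgeOf (⇑w) s) = 0 := by
  have hexp : A * ι ℝ (w i) =
      ∑ s : Finset (Fin n),
        (((-1 : ℝ) ^ s.card) * innE A (wedgeOf (⇑w) s)) •
          (ι ℝ (w i) * wedgeOf (⇑w) s) := by
    conv_lhs => rw [repr_eq innE w hinn A]
    rw [Finset.sum_mul]
    refine Finset.sum_congr rfl fun s _ => ?_
    rw [smul_mul_assoc, wedgeOf_mul_ι, smul_smul, mul_comm]
  rw [hexp, sum_ι_mul_eq_zero_iff innE w hinn i _]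
  constructor
  · intro h s hs
    have := h s hs
    rcases mul_eq_zero.mp this with h1 | h1
    · exact absurd h1 (pow_ne_zero _ (by norm_num))
    · exact h1
  · intro h s hs
    rw [h s hs, mul_zero]

lemma contr_ι_eq_zero_iff (lcontr : ExteriorAlgebra ℝ X →ₗ[ℝ] ExteriorAlgebra ℝ X →ₗ[ℝ]
      ExteriorAlgebra ℝ X) (hinn : InnerOK innE) (hc : ContrOK innE lcontr)
    (i : Fin n) (A : ExteriorAlgebra ℝ X) :
    lcontr (ι ℝ (w i)) A = 0 ↔
      ∀ s : Finset (Fin n), i ∈ s → innE A (wedgeOf (⇑w) s) = 0 := by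
  rw [eq_zero_iff innE w hinn]
  constructor
  · intro h s hs
    have ht := h (s.erase i)
    rw [hc, ι_mul_wedgeOf (⇑w) (Finset.notMem_erase i s), map_smul, smul_eq_mul,
      Finset.insert_erase hs] at ht
    rcases isign_isSign (⇑w) i (s.erase i) with hsig | hsig <;> rw [hsig] at ht <;>
      simpa using ht
  · intro h t
    rw [hc]
    by_cases hi : i ∈ t
    · rw [ι_mul_wedgeOf_of_mem (⇑w) hi, map_zero]
    · rw [ι_mul_wedgeOf (⇑w) hi, map_smul, h _ (Finset.mem_insert_self i t), smul_zero]

end Grades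
end GG
namespace GG
section Star
set_option linter.unusedSectionVars false
set_option maxHeartbeats 800000

variable {X : Type*} [NormedAddCommGroup X] [InnerProductSpace ℝ X] [FiniteDimensional ℝ X]
variable {n : ℕ}
variable (innE : ExteriorAlgebra ℝ X →ₗ[ℝ] ExteriorAlgebra ℝ X →ₗ[ℝ] ℝ)
variable (lcontr : ExteriorAlgebra ℝ X →ₗ[ℝ] ExteriorAlgebra ℝ X →ₗ[ℝ] ExteriorAlgebra ℝ X)
variable (w : OrthonormalBasis (Fin n) ℝ X)
variable (Ω : ExteriorAlgebra ℝ X)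

lemma omega_eq (hinn : InnerOK innE) (hn : Module.finrank ℝ X = n)
    (hΩmem : Ω ∈ ⋀[ℝ]^(Module.finrank ℝ X) X) :
    Ω = innE Ω (wedgeOf (⇑w) Finset.univ) • wedgeOf (⇑w) Finset.univ := by
  have hmem : Ω ∈ ⋀[ℝ]^n X := hn ▸ hΩmem
  have hcoeff : ∀ u : Finset (Fin n), u ≠ Finset.univ → innE Ω (wedgeOf (⇑w) u) = 0 := by
    intro u hu
    have hproj : gradeProj n Ω = Ω := gradeProj_of_mem hmem
    have := gradeProj_coeff innE w hinn n Ω u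
    rw [hproj, if_neg] at this
    · exact this
    · intro hcard
      exact hu ((Finset.card_eq_iff_eq_univ u).mp (by rw [hcard, Fintype.card_fin]))
  conv_lhs => rw [repr_eq innE w hinn Ω]
  rw [Finset.sum_eq_single Finset.univ]
  · intro s _ hs
    rw [hcoeff s hs, zero_smul]
  · intro h; exact absurd (Finset.mem_univ _) h

lemma omega_c_sq (hinn : InnerOK innE) (hn : Module.finrank ℝ X = n)
    (hΩmem : Ω ∈ ⋀[ℝ]^(Module.finrank ℝ X) X) (hΩunit : innE Ω Ω = 1) :
    innE Ω (wedgeOf (⇑w) Finset.univ) * innE Ω (wedgeOf (⇑w) Finset.univ) = 1 := by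
  have h : innE Ω Ω =
      innE Ω (wedgeOf (⇑w) Finset.univ) * innE Ω (wedgeOf (⇑w) Finset.univ) := by
    conv_lhs => rw [omega_eq innE w Ω hinn hn hΩmem]
    simp only [map_smul, LinearMap.smul_apply, smul_eq_mul]
    rw [hinn n w, if_pos rfl]
    ring
  rw [← h]
  exact hΩunit

lemma star_coeff (hinn : InnerOK innE) (hc : ContrOK innE lcontr)
    (hn : Module.finrank ℝ X = n) (hΩmem : Ω ∈ ⋀[ℝ]^(Module.finrank ℝ X) X)
    (A : ExteriorAlgebra ℝ X) (t : Finset (Fin n)) :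
    innE (lcontr A Ω) (wedgeOf (⇑w) t) =
      (innE Ω (wedgeOf (⇑w) Finset.univ) * msign (⇑w) tᶜ t) * innE A (wedgeOf (⇑w) tᶜ) := by
  rw [hc]
  conv_lhs => rw [omega_eq innE w Ω hinn hn hΩmem]
  rw [map_smul, LinearMap.smul_apply, smul_eq_mul]
  have hexp : A * wedgeOf (⇑w) t =
      ∑ s : Finset (Fin n), innE A (wedgeOf (⇑w) s) • (wedgeOf (⇑w) s * wedgeOf (⇑w) t) := by
    conv_lhs => rw [repr_eq innE w hinn A]
    rw [Finset.sum_mul]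
    exact Finset.sum_congr rfl fun s _ => smul_mul_assoc _ _ _
  rw [hexp, map_sum]
  have hterm : ∀ s : Finset (Fin n),
      innE (wedgeOf (⇑w) Finset.univ) (innE A (wedgeOf (⇑w) s) • (wedgeOf (⇑w) s * wedgeOf (⇑w) t)) =
        if s = tᶜ then msign (⇑w) tᶜ t * innE A (wedgeOf (⇑w) tᶜ) else 0 := by
    intro s
    by_cases hst : s = tᶜ
    · subst hst
      have hdisj : Disjoint tᶜ t := disjoint_compl_left
      have hun : tᶜ ∪ t = Finset.univ := by
        rw [← Finset.sup_eq_union, compl_sup_eq_top, Finset.top_eq_univ]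
      rw [if_pos rfl, map_smul, wedgeOf_mul_wedgeOf _ hdisj, map_smul, hun,
        hinn n w, if_pos rfl, smul_eq_mul, smul_eq_mul]
      ring
    · rw [if_neg hst]
      by_cases hd : Disjoint s t
      · have hne : s ∪ t ≠ Finset.univ := by
          intro h
          apply hst
          ext i
          simp only [Finset.mem_compl]
          constructor
          · intro hi
            exact Finset.disjoint_left.mp hd hi
          · intro hi
            have : i ∈ s ∪ t := h ▸ Finset.mem_univ i
            rcases Finset.mem_union.mp this with h' | h'
            · exact h'
            · exact absurd h' hi
        rw [map_smul, wedgeOf_mul_wedgeOf _ hd, map_smul, hinn n w,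
          if_neg (fun h => hne h.symm), smul_eq_mul, smul_eq_mul, mul_zero, mul_zero]
      · rw [wedgeOf_mul_wedgeOf_of_not_disjoint _ hd, smul_zero, map_zero]
  simp only [hterm]
  rw [Finset.sum_ite_eq' Finset.univ tᶜ, if_pos (Finset.mem_univ _)]
  ring

lemma star_factor_isSign (hinn : InnerOK innE) (hn : Module.finrank ℝ X = n)
    (hΩmem : Ω ∈ ⋀[ℝ]^(Module.finrank ℝ X) X) (hΩunit : innE Ω Ω = 1)
    (t : Finset (Fin n)) :
    innE Ω (wedgeOf (⇑w) Finset.univ) * msign (⇑w) tᶜ t ≠ 0 := by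
  have hc2 := omega_c_sq innE w Ω hinn hn hΩmem hΩunit
  have hc0 : innE Ω (wedgeOf (⇑w) Finset.univ) ≠ 0 := by
    intro h; rw [h, zero_mul] at hc2; norm_num at hc2
  exact mul_ne_zero hc0 (msign_isSign (⇑w) tᶜ t).ne_zero

lemma star_coeff_ne_iff (hinn : InnerOK innE) (hc : ContrOK innE lcontr)
    (hn : Module.finrank ℝ X = n) (hΩmem : Ω ∈ ⋀[ℝ]^(Module.finrank ℝ X) X)
    (hΩunit : innE Ω Ω = 1) (A : ExteriorAlgebra ℝ X) (t : Finset (Fin n)) :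
    innE (lcontr A Ω) (wedgeOf (⇑w) t) ≠ 0 ↔ innE A (wedgeOf (⇑w) tᶜ) ≠ 0 := by
  rw [star_coeff innE lcontr w Ω hinn hc hn hΩmem A t]
  constructor
  · intro h h0; apply h; rw [h0, mul_zero]
  · intro h
    exact mul_ne_zero (star_factor_isSign innE w Ω hinn hn hΩmem hΩunit t) h

include w in
lemma star_inj (hinn : InnerOK innE) (hc : ContrOK innE lcontr)
    (hn : Module.finrank ℝ X = n) (hΩmem : Ω ∈ ⋀[ℝ]^(Module.finrank ℝ X) X)
    (hΩunit : innE Ω Ω = 1) {A : ExteriorAlgebra ℝ X} (h : lcontr A Ω = 0) : A = 0 := by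
  rw [eq_zero_iff innE w hinn]
  intro s
  by_contra hne
  have := (star_coeff_ne_iff innE lcontr w Ω hinn hc hn hΩmem hΩunit A sᶜ).mpr
    (by rwa [compl_compl])
  apply this
  rw [h, map_zero, LinearMap.zero_apply]

end Star
end GG
namespace GG
section Adapted
set_option linter.unusedSectionVars false
set_option maxHeartbeats 1000000

variable {X : Type*} [NormedAddCommGroup X] [InnerProductSpace ℝ X] [FiniteDimensional ℝ X]
variable {n : ℕ}

lemma exists_adapted (hn : Module.finrank ℝ X = n) (U : Submodule ℝ X) :
    ∃ (b : OrthonormalBasis (Fin n) ℝ X) (T : Finset (Fin n)),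
      T.card = Module.finrank ℝ U ∧ ∀ i ∈ T, b i ∈ U := by
  classical
  set k := Module.finrank ℝ U with hk
  have hkn : k ≤ n := hn ▸ Submodule.finrank_le U
  set u := stdOrthonormalBasis ℝ U with hu
  set v : Fin n → X := fun i => if h : (i : ℕ) < k then (u ⟨i, h⟩ : X) else 0 with hv
  have hortho : Orthonormal ℝ (({i : Fin n | (i : ℕ) < k}).restrict v) := by
    constructor
    · rintro ⟨i, hi⟩
      have hi' : (i : ℕ) < k := hi
      change ‖v i‖ = 1
      simp only [Set.restrict, hv, dif_pos hi']
      rw [Submodule.norm_coe]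
      exact u.orthonormal.1 _
    · rintro ⟨i, hi⟩ ⟨j, hj⟩ hij
      have hi' : (i : ℕ) < k := hi
      have hj' : (j : ℕ) < k := hj
      change inner ℝ (v i) (v j) = 0
      simp only [Set.restrict, hv, dif_pos hi', dif_pos hj']
      rw [← Submodule.coe_inner]
      refine u.orthonormal.2 ?_
      intro h
      apply hij
      apply Subtype.ext
      exact Fin.ext (congrArg (Fin.val : Fin k → ℕ) h)
  obtain ⟨b, hb⟩ := hortho.exists_orthonormalBasis_extension_of_card_eq
    (by rw [hn, Fintype.card_fin])
  refine ⟨b, (Finset.univ : Finset (Fin k)).image (fun j => Fin.castLE hkn j), ?_, ?_⟩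
  · rw [Finset.card_image_of_injective _ (Fin.castLE_injective hkn), Finset.card_univ,
      Fintype.card_fin]
  · intro i hi
    obtain ⟨j, _, rfl⟩ := Finset.mem_image.mp hi
    have hlt : ((Fin.castLE hkn j : Fin n) : ℕ) < k := j.isLt
    rw [hb _ hlt]
    simp only [hv, dif_pos hlt]
    exact SetLike.coe_mem _

lemma exists_adapted_vec (hn : Module.finrank ℝ X = n) {v : X} (hv : v ≠ 0) :
    ∃ (b : OrthonormalBasis (Fin n) ℝ X) (i0 : Fin n), b i0 = ‖v‖⁻¹ • v := by
  have hnt : Nontrivial X := ⟨v, 0, hv⟩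
  have hn0 : 0 < n := hn ▸ Module.finrank_pos_iff.mpr hnt
  set i0 : Fin n := ⟨0, hn0⟩ with hi0
  set f : Fin n → X := fun _ => ‖v‖⁻¹ • v with hf
  have hnv : ‖v‖ ≠ 0 := norm_ne_zero_iff.mpr hv
  have hortho : Orthonormal ℝ (({i0} : Set (Fin n)).restrict f) := by
    constructor
    · rintro ⟨i, hi⟩
      change ‖f i‖ = 1
      simp only [Set.restrict, hf]
      rw [norm_smul, norm_inv, norm_norm, inv_mul_cancel₀ hnv]
    · rintro ⟨i, hi⟩ ⟨j, hj⟩ hij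
      exact absurd (Subtype.ext (show i = j from by
        have hi' : i = i0 := hi
        have hj' : j = i0 := hj
        rw [hi', hj'])) hij
  obtain ⟨b, hb⟩ := hortho.exists_orthonormalBasis_extension_of_card_eq
    (by rw [hn, Fintype.card_fin])
  exact ⟨b, i0, hb i0 rfl⟩

lemma mem_isp_iff (M : ExteriorAlgebra ℝ X) (v : X) :
    v ∈ isp M ↔ ι ℝ v * M = 0 := Iff.rfl

lemma mem_ospKer_iff
    (lcontr : ExteriorAlgebra ℝ X →ₗ[ℝ] ExteriorAlgebra ℝ X →ₗ[ℝ] ExteriorAlgebra ℝ X)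
    (M : ExteriorAlgebra ℝ X) (v : X) :
    v ∈ ospKer lcontr M ↔ lcontr (ι ℝ v) M = 0 := Iff.rfl

variable (innE : ExteriorAlgebra ℝ X →ₗ[ℝ] ExteriorAlgebra ℝ X →ₗ[ℝ] ℝ)
variable (lcontr : ExteriorAlgebra ℝ X →ₗ[ℝ] ExteriorAlgebra ℝ X →ₗ[ℝ] ExteriorAlgebra ℝ X)
variable (Ω : ExteriorAlgebra ℝ X)

include innE in
lemma ospKer_star_eq_isp (hinn : InnerOK innE) (hc : ContrOK innE lcontr)
    (hn : Module.finrank ℝ X = n) (hΩmem : Ω ∈ ⋀[ℝ]^(Module.finrank ℝ X) X)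
    (hΩunit : innE Ω Ω = 1) (M : ExteriorAlgebra ℝ X) :
    ospKer lcontr (lcontr M Ω) = isp M := by
  ext v
  by_cases hv : v = 0
  · subst hv
    simp only [mem_ospKer_iff, mem_isp_iff, map_zero, LinearMap.zero_apply, zero_mul]
  obtain ⟨b, i0, hb⟩ := exists_adapted_vec hn hv
  have hvb : ι ℝ v = ‖v‖ • ι ℝ (b i0) := by
    rw [hb, map_smul, smul_smul, mul_inv_cancel₀ (norm_ne_zero_iff.mpr hv), one_smul]
  have hsmul_zero : ∀ A : ExteriorAlgebra ℝ X, (‖v‖ • A = 0) ↔ A = 0 := by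
    intro A
    constructor
    · intro h
      have := congrArg (fun z => ‖v‖⁻¹ • z) h
      simpa [smul_smul, inv_mul_cancel₀ (norm_ne_zero_iff.mpr hv)] using this
    · intro h; rw [h, smul_zero]
  rw [mem_ospKer_iff, mem_isp_iff, hvb, map_smul, LinearMap.smul_apply, smul_mul_assoc,
    hsmul_zero, hsmul_zero]
  rw [contr_ι_eq_zero_iff innE b lcontr hinn hc i0 (lcontr M Ω),
    ι_mul_eq_zero_iff innE b hinn i0 M]
  constructor
  · intro h s hs
    have := h sᶜ (by rwa [Finset.mem_compl])
    by_contra hne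
    exact (star_coeff_ne_iff innE lcontr b Ω hinn hc hn hΩmem hΩunit M sᶜ).mpr
      (by rwa [compl_compl]) this
  · intro h s hs
    by_contra hne
    have h2 := (star_coeff_ne_iff innE lcontr b Ω hinn hc hn hΩmem hΩunit M s).mp hne
    exact h2 (h sᶜ (by simpa [Finset.mem_compl] using hs))

end Adapted
end GG
/-- Relations among the inner, bottom, top and outer grades,
and duality under the right Hodge dual `★M = M ⌟ Ω`. -/
theorem generalized_grades {X : Type*} [NormedAddCommGroup X]
    [InnerProductSpace ℝ X] [FiniteDimensional ℝ X]
    (innE : ExteriorAlgebra ℝ X →ₗ[ℝ] ExteriorAlgebra ℝ X →ₗ[ℝ] ℝ)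
    (lcontr : ExteriorAlgebra ℝ X →ₗ[ℝ] ExteriorAlgebra ℝ X →ₗ[ℝ] ExteriorAlgebra ℝ X)
    (hinn : InnerOK innE) (hc : ContrOK innE lcontr)
    (Ω : ExteriorAlgebra ℝ X) (hΩmem : Ω ∈ ⋀[ℝ]^(Module.finrank ℝ X) X)
    (hΩunit : innE Ω Ω = 1)
    (M : ExteriorAlgebra ℝ X) (hM0 : M ≠ 0) :
    -- (i)
    (Module.finrank ℝ (isp M) ≤ bgrade M ∧ bgrade M ≤ tgrade M ∧
      tgrade M ≤ Module.finrank ℝ (osp lcontr M)) ∧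
    -- (ii)
    (Module.finrank ℝ (isp M) + Module.finrank ℝ (osp lcontr (lcontr M Ω)) =
        Module.finrank ℝ X ∧
      bgrade M + tgrade (lcontr M Ω) = Module.finrank ℝ X) := by
  classical
  have w₀ : OrthonormalBasis (Fin (Module.finrank ℝ X)) ℝ X := stdOrthonormalBasis ℝ X
  set S : Set ℕ := {p | gradeProj p M ≠ 0} with hS
  have hbg : bgrade M = sInf S := rfl
  have htg : tgrade M = sSup S := rfl
  obtain ⟨p₀, hp₀⟩ := GG.exists_gradeProj_ne hM0
  have hSne : S.Nonempty := ⟨p₀, hp₀⟩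
  have hSub : ∀ p ∈ S, p ≤ Module.finrank ℝ X := by
    intro p hp
    obtain ⟨s, hcard, -⟩ := (GG.gradeProj_ne_zero_iff innE w₀ hinn p M).mp hp
    rw [← hcard]
    simpa using Finset.card_le_univ s
  have hSbdd : BddAbove S := ⟨Module.finrank ℝ X, fun p hp => hSub p hp⟩
  have h_in_bot : Module.finrank ℝ (isp M) ≤ bgrade M := by
    obtain ⟨b, T, hTcard, hTmem⟩ := GG.exists_adapted rfl (isp M)
    rw [hbg]
    refine le_csInf hSne ?_
    intro p hp
    obtain ⟨s, hcard, hne⟩ := (GG.gradeProj_ne_zero_iff innE b hinn p M).mp hp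
    have hTs : T ⊆ s := by
      intro i hi
      by_contra hns
      exact hne ((GG.ι_mul_eq_zero_iff innE b hinn i M).mp
        ((GG.mem_isp_iff M _).mp (hTmem i hi)) s hns)
    calc Module.finrank ℝ (isp M) = T.card := hTcard.symm
      _ ≤ s.card := Finset.card_le_card hTs
      _ = p := hcard
  have h_bot_top : bgrade M ≤ tgrade M := by
    rw [hbg, htg]
    exact csInf_le_csSup hSne (OrderBot.bddBelow S) hSbdd
  have hosp : Module.finrank ℝ (ospKer lcontr M) + Module.finrank ℝ (osp lcontr M) =
      Module.finrank ℝ X := by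
    have h := Submodule.finrank_add_finrank_orthogonal (K := ospKer lcontr M)
    unfold osp; exact h
  have h_top_out : tgrade M ≤ Module.finrank ℝ (osp lcontr M) := by
    obtain ⟨b, T, hTcard, hTmem⟩ := GG.exists_adapted rfl (ospKer lcontr M)
    rw [htg]
    refine csSup_le hSne ?_
    intro p hp
    obtain ⟨s, hcard, hne⟩ := (GG.gradeProj_ne_zero_iff innE b hinn p M).mp hp
    have hsT : s ⊆ Tᶜ := by
      intro i hi
      rw [Finset.mem_compl]
      intro hiT
      exact hne ((GG.contr_ι_eq_zero_iff innE b lcontr hinn hc i M).mp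
        ((GG.mem_ospKer_iff lcontr M _).mp (hTmem i hiT)) s hi)
    have hcb : p ≤ Module.finrank ℝ X - Module.finrank ℝ (ospKer lcontr M) := by
      rw [← hcard]
      calc s.card ≤ Tᶜ.card := Finset.card_le_card hsT
        _ = Fintype.card (Fin (Module.finrank ℝ X)) - T.card := Finset.card_compl T
        _ = Module.finrank ℝ X - Module.finrank ℝ (ospKer lcontr M) := by
            rw [Fintype.card_fin, hTcard]
    omega
  have h_ii1 : Module.finrank ℝ (isp M) + Module.finrank ℝ (osp lcontr (lcontr M Ω)) =
      Module.finrank ℝ X := by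
    have hker := GG.ospKer_star_eq_isp innE lcontr Ω hinn hc rfl hΩmem hΩunit M
    have hosp' : osp lcontr (lcontr M Ω) = (isp M)ᗮ := by rw [osp, hker]
    rw [hosp']
    exact Submodule.finrank_add_finrank_orthogonal (K := isp M)
  have h_ii2 : bgrade M + tgrade (lcontr M Ω) = Module.finrank ℝ X := by
    set S' : Set ℕ := {p | gradeProj p (lcontr M Ω) ≠ 0} with hS'
    have htg' : tgrade (lcontr M Ω) = sSup S' := rfl
    have hfwd : ∀ p ∈ S, (Module.finrank ℝ X - p) ∈ S' := by
      intro p hp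
      obtain ⟨s, hcard, hne⟩ := (GG.gradeProj_ne_zero_iff innE w₀ hinn p M).mp hp
      have h1 : innE (lcontr M Ω) (wedgeOf (⇑w₀) sᶜ) ≠ 0 :=
        (GG.star_coeff_ne_iff innE lcontr w₀ Ω hinn hc rfl hΩmem hΩunit M sᶜ).mpr
          (by rwa [compl_compl])
      refine (GG.gradeProj_ne_zero_iff innE w₀ hinn _ (lcontr M Ω)).mpr ⟨sᶜ, ?_, h1⟩
      rw [Finset.card_compl, Fintype.card_fin, hcard]
    have hbwd : ∀ q ∈ S', (Module.finrank ℝ X - q) ∈ S ∧ q ≤ Module.finrank ℝ X := by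
      intro q hq
      obtain ⟨t, hcard, hne⟩ := (GG.gradeProj_ne_zero_iff innE w₀ hinn q (lcontr M Ω)).mp hq
      have h1 : innE M (wedgeOf (⇑w₀) tᶜ) ≠ 0 :=
        (GG.star_coeff_ne_iff innE lcontr w₀ Ω hinn hc rfl hΩmem hΩunit M t).mp hne
      constructor
      · refine (GG.gradeProj_ne_zero_iff innE w₀ hinn _ M).mpr ⟨tᶜ, ?_, h1⟩
        rw [Finset.card_compl, Fintype.card_fin, hcard]
      · rw [← hcard]
        simpa using Finset.card_le_univ t
    have hm0 : sInf S ∈ S := Nat.sInf_mem hSne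
    have hm0n : sInf S ≤ Module.finrank ℝ X := hSub _ hm0
    have hS'bdd : BddAbove S' := ⟨Module.finrank ℝ X, fun q hq => (hbwd q hq).2⟩
    have hS'ne : S'.Nonempty := ⟨_, hfwd _ hm0⟩
    have hup : sSup S' ≤ Module.finrank ℝ X - sInf S := by
      refine csSup_le hS'ne ?_
      intro q hq
      obtain ⟨hmem, hqn⟩ := hbwd q hq
      have := Nat.sInf_le hmem
      omega
    have hlo : Module.finrank ℝ X - sInf S ≤ sSup S' := le_csSup hS'bdd (hfwd _ hm0)
    rw [hbg, htg']
    omega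
  exact ⟨⟨h_in_bot, h_bot_top, h_top_out⟩, h_ii1, h_ii2⟩

end
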